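/- arXiv:1408.4748 — 5 statements merged into one kernel-verified Lean document; each statement's English description precedes it below -/
import Mathlib

section
/- Let x ∈ ℝ≥0^n satisfy A ⊗ x ≥ x, and let τ be a partial map on supp(x) with a_{i,τ(i)} x_{τ(i)} ≥ x_i for all i ∈ supp(x). Then every cycle of τ, i.e. every sequence i, τ(i), …, τ^ℓ(i) = i, has weight a_{i,τ(i)} · a_{τ(i),τ²(i)} · … · a_{τ^{ℓ−1}(i),i} ≥ 1. -/
/-- If `A ⊗ x ≥ x` is witnessed by a partial map `τ` on the support of `x`, i.e.
`a_{i,τ(i)} x_{τ(i)} ≥ x_i` whenever `x_i > 0`, then every cycle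
`i, τ(i), …, τ^ℓ(i) = i` starting in the support of `x` has weight
`∏_{s<ℓ} a_{τ^s(i), τ^{s+1}(i)} ≥ 1`. -/
theorem stmt5 {n : ℕ} (A : Matrix (Fin n) (Fin n) NNReal) (x : Fin n → NNReal)
    (τ : Fin n → Fin n)
    (h : ∀ i, 0 < x i → x i ≤ A i (τ i) * x (τ i))
    (i : Fin n) (hi : 0 < x i) (ℓ : ℕ) (hℓ : 1 ≤ ℓ) (hc : τ^[ℓ] i = i) :
    1 ≤ ∏ s ∈ Finset.range ℓ, A (τ^[s] i) (τ^[s + 1] i) := by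
  have key : ∀ m, x i ≤ (∏ s ∈ Finset.range m, A (τ^[s] i) (τ^[s + 1] i)) * x (τ^[m] i)
      ∧ 0 < x (τ^[m] i) := by
    intro m
    induction m with
    | zero => simpa using hi
    | succ m ih =>
      obtain ⟨h1, h2⟩ := ih
      have h3 := h _ h2
      constructor
      · calc x i ≤ (∏ s ∈ Finset.range m, A (τ^[s] i) (τ^[s + 1] i)) * x (τ^[m] i) := h1
          _ ≤ (∏ s ∈ Finset.range m, A (τ^[s] i) (τ^[s + 1] i)) *
              (A (τ^[m] i) (τ (τ^[m] i)) * x (τ (τ^[m] i))) := by gcongr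
          _ = (∏ s ∈ Finset.range (m+1), A (τ^[s] i) (τ^[s + 1] i)) * x (τ^[m+1] i) := by
              rw [Finset.prod_range_succ, Function.iterate_succ_apply']
              ring
      · have h4 : 0 < x (τ (τ^[m] i)) := by
          rcases eq_zero_or_pos (x (τ (τ^[m] i))) with hz | hp
          · rw [hz, mul_zero] at h3
            exact absurd (le_antisymm h3 zero_le) h2.ne'
          · exact hp
        rwa [Function.iterate_succ_apply']
  obtain ⟨h1, _⟩ := key ℓ
  rw [hc] at h1
  exact le_of_mul_le_mul_right (by rwa [one_mul]) hi
end

section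
/- Let τ be an admissible strategy for A with domain D (every cycle of τ has weight ≥ 1, all a_{i,τ(i)} > 0), and for k ∈ D define the vector x^{(τ,k)} by: x^{(τ,k)}_k = 1; x^{(τ,k)}_i = (weight of the unique τ-walk from k to i)^{−1} if i ≠ k is reachable from k under τ; x^{(τ,k)}_i = 0 otherwise. Then A ⊗ x^{(τ,k)} ≥ x^{(τ,k)}, i.e. x^{(τ,k)} ∈ V*(A). -/
/-- Max-times matrix-vector product. -/
def mv {n : ℕ} (A : Matrix (Fin n) (Fin n) NNReal) (x : Fin n → NNReal) : Fin n → NNReal :=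
  fun i => Finset.univ.sup fun j => A i j * x j

/-- Let `τ` be an admissible strategy for `A` with domain `D` (maps `D` into itself,
`a_{i,τ(i)} > 0` on `D`, every `τ`-cycle has weight `≥ 1`), let `k ∈ D`, and let
`x = x^{(τ,k)}`, i.e. `x_k = 1`, `x_i` is the reciprocal of the weight of the unique
(minimal) `τ`-walk from `k` to `i` when `i ≠ k` is reachable from `k`, and `x_i = 0`
when `i` is not reachable from `k`. Then `A ⊗ x ≥ x`, i.e. `x ∈ V*(A)`. -/
theorem stmt12 {n : ℕ} (A : Matrix (Fin n) (Fin n) NNReal) (D : Finset (Fin n))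
    (τ : Fin n → Fin n)
    (hmaps : ∀ i ∈ D, τ i ∈ D)
    (hpos : ∀ i ∈ D, 0 < A i (τ i))
    (hcyc : ∀ i ∈ D, ∀ ℓ : ℕ, 1 ≤ ℓ → τ^[ℓ] i = i →
      1 ≤ ∏ s ∈ Finset.range ℓ, A (τ^[s] i) (τ^[s + 1] i))
    (k : Fin n) (hk : k ∈ D)
    (x : Fin n → NNReal)
    (hxk : x k = 1)
    (hxr : ∀ i : Fin n, i ≠ k → ∀ m : ℕ, τ^[m] k = i → (∀ m' < m, τ^[m'] k ≠ i) →
      x i = (∏ s ∈ Finset.range m, A (τ^[s] k) (τ^[s + 1] k))⁻¹)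
    (hx0 : ∀ i : Fin n, (∀ m : ℕ, τ^[m] k ≠ i) → x i = 0) :
    ∀ i, x i ≤ mv A x i := by

  classical
  have hD : ∀ m : ℕ, τ^[m] k ∈ D := by
    intro m; induction m with
    | zero => simpa using hk
    | succ m ih => rw [Function.iterate_succ_apply']; exact hmaps _ ih
  set W : ℕ → NNReal := fun m => ∏ s ∈ Finset.range m, A (τ^[s] k) (τ^[s + 1] k) with hW
  have hWpos : ∀ m, 0 < W m := by
    intro m
    apply Finset.prod_pos
    intro s _
    have := hpos _ (hD s)
    rwa [← Function.iterate_succ_apply' τ s k] at this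
  have hxval : ∀ m : ℕ, (∀ m' < m, τ^[m'] k ≠ τ^[m] k) → x (τ^[m] k) = (W m)⁻¹ := by
    intro m hmin
    by_cases h : τ^[m] k = k
    · have hm0 : m = 0 := by
        by_contra hm
        exact hmin 0 (Nat.pos_of_ne_zero hm) (by simp [h])
      subst hm0
      simp [h, hxk, hW]
    · exact hxr _ h m rfl hmin
  intro i
  by_cases hreach : ∃ m, τ^[m] k = i
  · set m := Nat.find hreach with hm
    have hmi : τ^[m] k = i := Nat.find_spec hreach
    have hmmin : ∀ m' < m, τ^[m'] k ≠ i := fun m' h => Nat.find_min hreach h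
    have hxi : x i = (W m)⁻¹ := by
      rw [← hmi]; exact hxval m (by simpa [hmi] using hmmin)
    have hreach' : ∃ m', τ^[m'] k = τ i :=
      ⟨m + 1, by rw [Function.iterate_succ_apply', hmi]⟩
    set p := Nat.find hreach' with hp
    have hpi : τ^[p] k = τ i := Nat.find_spec hreach'
    have hpmin : ∀ m' < p, τ^[m'] k ≠ τ i := fun m' h => Nat.find_min hreach' h
    have hple : p ≤ m + 1 := Nat.find_le (by rw [Function.iterate_succ_apply', hmi])
    have hxti : x (τ i) = (W p)⁻¹ := by
      rw [← hpi]; exact hxval p (by simpa [hpi] using hpmin)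
    have ha : A i (τ i) = A (τ^[m] k) (τ^[m + 1] k) := by
      rw [hmi, Function.iterate_succ_apply', hmi]
    have hWsucc : W (m + 1) = W m * A i (τ i) := by
      rw [ha, hW]; exact Finset.prod_range_succ _ m
    have hWle : W p ≤ W (m + 1) := by
      rcases eq_or_lt_of_le hple with h | h
      · rw [h]
      · have hpm : p ≤ m := Nat.lt_succ_iff.mp h
        have hℓ : τ^[m + 1 - p] (τ^[p] k) = τ^[p] k := by
          rw [← Function.iterate_add_apply, Nat.sub_add_cancel (by omega)]
          rw [Function.iterate_succ_apply', hmi, hpi]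
        have hc := hcyc _ (hD p) (m + 1 - p) (by omega) hℓ
        have hsplit : W (m + 1) = W p * ∏ s ∈ Finset.range (m + 1 - p),
            A (τ^[s] (τ^[p] k)) (τ^[s + 1] (τ^[p] k)) := by
          have h2 := Finset.prod_range_add
            (fun s => A (τ^[s] k) (τ^[s + 1] k)) p (m + 1 - p)
          rw [Nat.add_sub_cancel' (by omega : p ≤ m + 1)] at h2
          simp only [hW]
          rw [h2]
          congr 1
          apply Finset.prod_congr rfl
          intro s _
          rw [← Function.iterate_add_apply, ← Function.iterate_add_apply]
          congr 2 <;> omega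
        calc W p = W p * 1 := (mul_one _).symm
          _ ≤ W p * _ := mul_le_mul_right hc _
          _ = W (m + 1) := hsplit.symm
    have hane : A i (τ i) ≠ 0 := by
      have : i ∈ D := hmi ▸ hD m
      exact (hpos i this).ne'
    have key : x i ≤ A i (τ i) * x (τ i) := by
      rw [hxi, hxti]
      have h1 : (W m)⁻¹ = A i (τ i) * (W (m + 1))⁻¹ := by
        rw [hWsucc, mul_inv, mul_comm (W m)⁻¹, ← mul_assoc,
          mul_inv_cancel₀ hane, one_mul]
      rw [h1]
      have : (W (m + 1))⁻¹ ≤ (W p)⁻¹ := by gcongr; exact hWpos p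
      exact mul_le_mul_right this _
    refine key.trans ?_
    unfold mv
    exact Finset.le_sup (f := fun j => A i j * x j) (Finset.mem_univ (τ i))
  · rw [hx0 i (by push_neg at hreach; exact hreach)]
    exact zero_le
end

section
/- With τ an admissible strategy and x^{(τ,k)} defined as in the paper, the max cone V*(A^τ) = {x : A^τ ⊗ x ≥ x} is generated by the vectors x^{(τ,k)}, k ∈ dom(τ), together with the unit coordinate vectors e_i for i ∉ dom(τ): every x with A^τ ⊗ x ≥ x is a max combination of these vectors (equivalently, restricting to x supported in dom(τ), x is a max combination of the x^{(τ,k)}). -/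
/-- The matrix `A^τ`. -/
def Atau {n : ℕ} (A : Matrix (Fin n) (Fin n) NNReal) (D : Finset (Fin n))
    (τ : Fin n → Fin n) : Matrix (Fin n) (Fin n) NNReal :=
  fun i j => if i ∈ D ∧ j = τ i then A i j else 0

/-- Let `τ` be an admissible strategy with domain `D` and, for `k ∈ D`, let
`X k = x^{(τ,k)}` (`X k k = 1`, `X k i` the reciprocal of the weight of the unique
`τ`-walk from `k` to `i` when reachable, `0` otherwise). Then the max cone
`V*(A^τ) = {x : A^τ ⊗ x ≥ x}` is generated by the vectors `X k`, `k ∈ D`, together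
with the unit coordinate vectors `e_k`, `k ∉ D`: every `x` with `A^τ ⊗ x ≥ x` is a
max combination of these vectors. -/
theorem stmt13 {n : ℕ} (A : Matrix (Fin n) (Fin n) NNReal) (D : Finset (Fin n))
    (τ : Fin n → Fin n)
    (hmaps : ∀ i ∈ D, τ i ∈ D)
    (hpos : ∀ i ∈ D, 0 < A i (τ i))
    (hcyc : ∀ i ∈ D, ∀ ℓ : ℕ, 1 ≤ ℓ → τ^[ℓ] i = i →
      1 ≤ ∏ s ∈ Finset.range ℓ, A (τ^[s] i) (τ^[s + 1] i))
    (X : Fin n → Fin n → NNReal)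
    (hXk : ∀ k ∈ D, X k k = 1)
    (hXr : ∀ k ∈ D, ∀ i : Fin n, i ≠ k → ∀ m : ℕ, τ^[m] k = i → (∀ m' < m, τ^[m'] k ≠ i) →
      X k i = (∏ s ∈ Finset.range m, A (τ^[s] k) (τ^[s + 1] k))⁻¹)
    (hX0 : ∀ k ∈ D, ∀ i : Fin n, (∀ m : ℕ, τ^[m] k ≠ i) → X k i = 0) :
    ∀ x : Fin n → NNReal, (∀ i, x i ≤ mv (Atau A D τ) x i) →
      ∃ c : Fin n → NNReal, x = fun i =>
        Finset.univ.sup fun k =>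
          c k * (if k ∈ D then X k i else if i = k then 1 else 0) := by

  intro x hx
  have hstep : ∀ j ∈ D, x j ≤ A j (τ j) * x (τ j) := by
    intro j hj
    refine (hx j).trans (Finset.sup_le fun j' _ => ?_)
    by_cases h : j' = τ j
    · subst h; simp [Atau, hj]
    · simp [Atau, h]
  have hnotD : ∀ j, j ∉ D → x j = 0 := by
    intro j hj
    refine le_antisymm ((hx j).trans (Finset.sup_le fun j' _ => ?_)) zero_le
    simp [Atau, hj]
  have horb : ∀ k ∈ D, ∀ s : ℕ, τ^[s] k ∈ D := by
    intro k hk s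
    induction s with
    | zero => simpa
    | succ s ih => rw [Function.iterate_succ_apply']; exact hmaps _ ih
  have hiter : ∀ k ∈ D, ∀ m : ℕ,
      x k ≤ (∏ s ∈ Finset.range m, A (τ^[s] k) (τ^[s+1] k)) * x (τ^[m] k) := by
    intro k hk m
    induction m with
    | zero => simp
    | succ m ih =>
      refine ih.trans ?_
      rw [Finset.prod_range_succ, mul_assoc]
      refine mul_le_mul_right ?_ _
      have := hstep _ (horb k hk m)
      rwa [← Function.iterate_succ_apply' τ m k] at this
  have hPpos : ∀ k ∈ D, ∀ m : ℕ,
      (∏ s ∈ Finset.range m, A (τ^[s] k) (τ^[s+1] k)) ≠ 0 := by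
    intro k hk m
    refine Finset.prod_ne_zero_iff.mpr fun s _ => ?_
    have := hpos _ (horb k hk s)
    rw [Function.iterate_succ_apply' τ s k]
    exact this.ne'
  refine ⟨x, funext fun i => le_antisymm ?_ (Finset.sup_le fun k _ => ?_)⟩
  · by_cases hi : i ∈ D
    · have := Finset.le_sup (f := fun k =>
        x k * (if k ∈ D then X k i else if i = k then 1 else 0))
        (Finset.mem_univ i)
      simpa [hi, hXk i hi] using this
    · simp [hnotD i hi]
  · by_cases hk : k ∈ D
    · simp only [hk, if_pos]
      by_cases hik : i = k
      · subst hik; rw [hXk i hk]; simp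
      · by_cases hreach : ∃ m : ℕ, τ^[m] k = i
        · set m := Nat.find hreach with hm
          have hspec : τ^[m] k = i := Nat.find_spec hreach
          have hmin : ∀ m' < m, τ^[m'] k ≠ i := fun m' h => Nat.find_min hreach h
          rw [hXr k hk i hik m hspec hmin]
          have h1 := hiter k hk m
          rw [hspec] at h1
          calc x k * (∏ s ∈ Finset.range m, A (τ^[s] k) (τ^[s+1] k))⁻¹
              ≤ ((∏ s ∈ Finset.range m, A (τ^[s] k) (τ^[s+1] k)) * x i) *
                (∏ s ∈ Finset.range m, A (τ^[s] k) (τ^[s+1] k))⁻¹ :=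
                mul_le_mul_left h1 _
            _ = x i := by
                rw [mul_comm _ (x i), mul_assoc, mul_inv_cancel₀ (hPpos k hk m), mul_one]
        · rw [hX0 k hk i (by push_neg at hreach; exact hreach)]; simp
    · simp only [hk, if_neg, if_false]
      by_cases hik : i = k
      · subst hik; simp [hnotD i hk]
      · simp [hik]
end

section
/- For any closed max cone K ⊆ ℝ≥0^n, the set E of scaled extremals (extremals u with max_i u_i = 1) is nonempty whenever K ≠ {0}, K = span(E), and E is the unique scaled basis of K (no element of E is a max combination of the others). -/
/-- The max cone spanned by `S`. -/
def spanOf {n : ℕ} (S : Set (Fin n → NNReal)) : Set (Fin n → NNReal) :=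
  {x | ∃ (m : ℕ) (v : Fin m → Fin n → NNReal) (c : Fin m → NNReal),
    (∀ j, v j ∈ S) ∧ x = fun i => Finset.univ.sup fun j => c j * v j i}

/-- `x` is an extremal of `K`. -/
def IsExtremal {n : ℕ} (K : Set (Fin n → NNReal)) (x : Fin n → NNReal) : Prop :=
  ∀ u ∈ K, ∀ v ∈ K, x = (fun i => max (u i) (v i)) → x = u ∨ x = v

lemma finSupSplit {α : Type*} [SemilatticeSup α] [OrderBot α] (m m' : ℕ) (f : Fin (m+m') → α) :
    Finset.univ.sup f =
      (Finset.univ.sup fun j : Fin m => f (Fin.castAdd m' j)) ⊔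
      (Finset.univ.sup fun j : Fin m' => f (Fin.natAdd m j)) := by
  apply le_antisymm
  · apply Finset.sup_le
    intro j _
    induction j using Fin.addCases with
    | left j =>
      exact le_sup_of_le_left
        (Finset.le_sup (f := fun j => f (Fin.castAdd m' j)) (Finset.mem_univ j))
    | right j =>
      exact le_sup_of_le_right
        (Finset.le_sup (f := fun j => f (Fin.natAdd m j)) (Finset.mem_univ j))
  · apply sup_le <;> exact Finset.sup_le fun j _ => Finset.le_sup (Finset.mem_univ _)

lemma zeroMemSpanOf {n : ℕ} (S : Set (Fin n → NNReal)) : (0 : Fin n → NNReal) ∈ spanOf S :=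
  ⟨0, Fin.elim0, Fin.elim0, fun j => j.elim0, by funext i; simp⟩

lemma selfMemSpanOf {n : ℕ} {S : Set (Fin n → NNReal)} {u : Fin n → NNReal} (hu : u ∈ S) :
    u ∈ spanOf S :=
  ⟨1, fun _ => u, fun _ => 1, fun _ => hu, by funext i; simp⟩

lemma supMemSpanOf {n : ℕ} {S : Set (Fin n → NNReal)} {x y : Fin n → NNReal}
    (hx : x ∈ spanOf S) (hy : y ∈ spanOf S) : (fun i => max (x i) (y i)) ∈ spanOf S := by
  obtain ⟨m, v, c, hv, rfl⟩ := hx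
  obtain ⟨m', w, d, hw, rfl⟩ := hy
  refine ⟨m + m', Fin.addCases v w, Fin.addCases c d, ?_, ?_⟩
  · intro j
    induction j using Fin.addCases with
    | left j => simpa using hv j
    | right j => simpa using hw j
  · funext i
    rw [finSupSplit m m']
    simp

lemma finsupMemK {n : ℕ} {K : Set (Fin n → NNReal)} (h0 : (0 : Fin n → NNReal) ∈ K)
    (hsup : ∀ x ∈ K, ∀ y ∈ K, (fun i => max (x i) (y i)) ∈ K) :
    ∀ (m : ℕ) (w : Fin m → Fin n → NNReal), (∀ j, w j ∈ K) →
      (fun i => Finset.univ.sup fun j => w j i) ∈ K := by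
  intro m
  induction m with
  | zero =>
    intro w _
    have : (fun i : Fin n => (Finset.univ : Finset (Fin 0)).sup fun j => w j i)
        = (0 : Fin n → NNReal) := by funext i; simp
    rw [this]; exact h0
  | succ m ih =>
    intro w hw
    have h1 := ih (fun j => w (Fin.castAdd 1 j)) (fun j => hw _)
    have h2 := hw (Fin.natAdd m 0)
    have h3 := hsup _ h1 _ h2
    have : (fun i : Fin n => Finset.univ.sup fun j => w j i) =
        (fun i => max ((fun i => Finset.univ.sup fun j : Fin m => w (Fin.castAdd 1 j) i) i)
          (w (Fin.natAdd m 0) i)) := by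
      funext i
      rw [finSupSplit m 1]
      simp
    rw [this]; exact h3

lemma spanOfSubsetK {n : ℕ} {K S : Set (Fin n → NNReal)}
    (h0 : (0 : Fin n → NNReal) ∈ K)
    (hsup : ∀ x ∈ K, ∀ y ∈ K, (fun i => max (x i) (y i)) ∈ K)
    (hsmul : ∀ (c : NNReal), ∀ x ∈ K, (fun i => c * x i) ∈ K)
    (hS : S ⊆ K) : spanOf S ⊆ K := by
  rintro x ⟨m, v, c, hv, rfl⟩
  exact finsupMemK h0 hsup m (fun j i => c j * v j i) (fun j => hsmul (c j) _ (hS (hv j)))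

lemma extremalEqTerm {n : ℕ} {K : Set (Fin n → NNReal)}
    (h0 : (0 : Fin n → NNReal) ∈ K)
    (hsup : ∀ x ∈ K, ∀ y ∈ K, (fun i => max (x i) (y i)) ∈ K)
    {x : Fin n → NNReal} (hx : IsExtremal K x) (hx0 : x ≠ 0) :
    ∀ (m : ℕ) (w : Fin m → Fin n → NNReal), (∀ j, w j ∈ K) →
      x = (fun i => Finset.univ.sup fun j => w j i) → ∃ j, x = w j := by
  intro m
  induction m with
  | zero =>
    intro w _ hxe
    exact absurd (by funext i; simpa using congrFun hxe i) hx0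
  | succ m ih =>
    intro w hw hxe
    have h1 := finsupMemK h0 hsup m (fun j => w (Fin.castAdd 1 j)) (fun j => hw _)
    have h2 := hw (Fin.natAdd m 0)
    have hsplit : x = fun i =>
        max ((fun i => Finset.univ.sup fun j : Fin m => w (Fin.castAdd 1 j) i) i)
          (w (Fin.natAdd m 0) i) := by
      funext i
      rw [congrFun hxe i, finSupSplit m 1]
      simp
    rcases hx _ h1 _ h2 hsplit with h | h
    · obtain ⟨j, hj⟩ := ih (fun j => w (Fin.castAdd 1 j)) (fun j => hw _) h
      exact ⟨_, hj⟩
    · exact ⟨_, h⟩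

lemma scaledExtremal {n : ℕ} {K : Set (Fin n → NNReal)}
    (hsmul : ∀ (c : NNReal), ∀ x ∈ K, (fun i => c * x i) ∈ K)
    {z : Fin n → NNReal} (hz : IsExtremal K z) {s : NNReal} (hs : s ≠ 0) :
    IsExtremal K (fun j => s⁻¹ * z j) := by
  intro u hu v hv heq
  have h1 : z = fun i => max (s * u i) (s * v i) := by
    funext i
    have h2 := congrFun heq i
    have h3 : z i = s * max (u i) (v i) := by
      rw [← h2, ← mul_assoc, mul_inv_cancel₀ hs, one_mul]
    rw [h3, mul_max]
  rcases hz _ (hsmul s u hu) _ (hsmul s v hv) h1 with h | h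
  · left; funext i; rw [congrFun h i, ← mul_assoc, inv_mul_cancel₀ hs, one_mul]
  · right; funext i; rw [congrFun h i, ← mul_assoc, inv_mul_cancel₀ hs, one_mul]

lemma genSpan {n : ℕ} (K : Set (Fin n → NNReal))
    (h0 : (0 : Fin n → NNReal) ∈ K)
    (hsup : ∀ x ∈ K, ∀ y ∈ K, (fun i => max (x i) (y i)) ∈ K)
    (hsmul : ∀ (c : NNReal), ∀ x ∈ K, (fun i => c * x i) ∈ K)
    (hclosed : IsClosed K) :
    K = spanOf {u | u ∈ K ∧ IsExtremal K u ∧ Finset.univ.sup u = 1} := by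
  classical
  set E := {u | u ∈ K ∧ IsExtremal K u ∧ Finset.univ.sup u = 1} with hE
  apply Set.Subset.antisymm
  · -- K ⊆ spanOf E
    intro x hxK
    by_cases hx0 : x = 0
    · rw [hx0]; exact zeroMemSpanOf E
    -- extremals below x
    have key : ∀ i : Fin n, x i ≠ 0 →
        ∃ z, z ∈ K ∧ (∀ j, z j ≤ x j) ∧ z i = x i ∧ IsExtremal K z := by
      intro i hi
      set S : Set (Fin n → NNReal) := (K ∩ Set.Icc 0 x) ∩ {z | z i = x i} with hSdef
      have hSclosed : IsClosed S :=
        (hclosed.inter isClosed_Icc).inter (isClosed_eq (continuous_apply i) continuous_const)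
      have hScompact : IsCompact S := by
        apply IsCompact.of_isClosed_subset (isCompact_Icc (a := (0 : Fin n → NNReal)) (b := x))
          hSclosed
        intro z hz; exact hz.1.2
      have hxS : x ∈ S := ⟨⟨hxK, ⟨fun j => zero_le, le_refl x⟩⟩, rfl⟩
      have hcont : ContinuousOn (fun z : Fin n → NNReal => ∑ j, z j) S :=
        (continuous_finset_sum _ fun j _ => continuous_apply j).continuousOn
      obtain ⟨z, hzS, hzmin⟩ := hScompact.exists_isMinOn ⟨x, hxS⟩ hcont
      have hzK : z ∈ K := hzS.1.1
      have hzle : ∀ j, z j ≤ x j := fun j => hzS.1.2.2 j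
      have hzi : z i = x i := hzS.2
      refine ⟨z, hzK, hzle, hzi, ?_⟩
      intro u hu v hv heq
      have hule : ∀ j, u j ≤ z j := fun j => (congrFun heq j) ▸ le_max_left _ _
      have hvle : ∀ j, v j ≤ z j := fun j => (congrFun heq j) ▸ le_max_right _ _
      have hkey : ∀ w, w ∈ K → (∀ j, w j ≤ z j) → w i = x i → z = w := by
        intro w hw hwz hwi
        have hwS : w ∈ S :=
          ⟨⟨hw, ⟨fun j => zero_le, fun j => (hwz j).trans (hzle j)⟩⟩, hwi⟩
        have hle : (∑ j, z j) ≤ ∑ j, w j := isMinOn_iff.mp hzmin w hwS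
        have hge : (∑ j, w j) ≤ ∑ j, z j := Finset.sum_le_sum fun j _ => hwz j
        have heqsum : (∑ j, w j) = ∑ j, z j := le_antisymm hge hle
        have := (Finset.sum_eq_sum_iff_of_le (fun j _ => hwz j)).mp heqsum
        funext j
        exact (this j (Finset.mem_univ j)).symm
      have hmax : max (u i) (v i) = x i := (congrFun heq i).symm.trans hzi
      rcases max_eq_iff.mp hmax with ⟨h, _⟩ | ⟨h, _⟩
      · exact Or.inl (hkey u hu hule h)
      · exact Or.inr (hkey v hv hvle h)
    choose z hzK hzle hzi hzext using key
    obtain ⟨i₀, hi₀⟩ : ∃ i, x i ≠ 0 := by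
      by_contra h
      push_neg at h
      exact hx0 (funext fun i => h i)
    -- scaled extremal data
    have hsne : ∀ (i : Fin n) (h : x i ≠ 0), Finset.univ.sup (z i h) ≠ 0 := by
      intro i h hc
      apply h
      have := Finset.le_sup (f := z i h) (Finset.mem_univ i)
      rw [hc] at this
      rw [← hzi i h]
      exact le_antisymm this (zero_le)
    have hmemE : ∀ (i : Fin n) (h : x i ≠ 0),
        (fun j => (Finset.univ.sup (z i h))⁻¹ * z i h j) ∈ E := by
      intro i h
      refine ⟨hsmul _ _ (hzK i h), scaledExtremal hsmul (hzext i h) (hsne i h), ?_⟩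
      rw [← NNReal.mul_finset_sup]
      exact inv_mul_cancel₀ (hsne i h)
    set e : Fin n → Fin n → NNReal := fun i =>
      if h : x i ≠ 0 then (fun j => (Finset.univ.sup (z i h))⁻¹ * z i h j)
      else (fun j => (Finset.univ.sup (z i₀ hi₀))⁻¹ * z i₀ hi₀ j) with he
    set c : Fin n → NNReal := fun i =>
      if h : x i ≠ 0 then Finset.univ.sup (z i h) else 0 with hc
    refine ⟨n, e, c, ?_, ?_⟩
    · intro i
      by_cases h : x i ≠ 0
      · simpa [he, h] using hmemE i h
      · have hei : e i = fun j => (Finset.univ.sup (z i₀ hi₀))⁻¹ * z i₀ hi₀ j := by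
          simp only [he, dif_neg h]
        rw [hei]; exact hmemE i₀ hi₀
    · funext j
      have hterm : ∀ (i : Fin n) (h : x i ≠ 0), c i * e i j = z i h j := by
        intro i h
        simp only [he, hc, dif_pos h]
        rw [← mul_assoc, mul_inv_cancel₀ (hsne i h), one_mul]
      apply le_antisymm
      · by_cases hj : x j = 0
        · rw [hj]; exact zero_le
        · have h1 : x j = c j * e j j := by rw [hterm j hj, hzi j hj]
          rw [h1]
          exact Finset.le_sup (f := fun i => c i * e i j) (Finset.mem_univ j)
      · apply Finset.sup_le
        intro i _
        by_cases h : x i ≠ 0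
        · rw [hterm i h]; exact hzle i h j
        · have hci : c i = 0 := by simp only [hc, dif_neg h]
          rw [hci, zero_mul]; exact zero_le
  · -- spanOf E ⊆ K
    exact spanOfSubsetK h0 hsup hsmul (fun u hu => hu.1)

lemma memSpanOfFinsetSup' {n : ℕ} {S : Set (Fin n → NNReal)} {ι : Type} (s : Finset ι)
    (v : ι → Fin n → NNReal) (c : ι → NNReal) (hv : ∀ j ∈ s, v j ∈ S) :
    (fun i => s.sup fun j => c j * v j i) ∈ spanOf S := by
  refine ⟨s.card, fun k => v (s.equivFin.symm k), fun k => c (s.equivFin.symm k),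
    fun k => hv _ (s.equivFin.symm k).2, ?_⟩
  funext i
  apply le_antisymm
  · apply Finset.sup_le; intro j hj
    have h : c j * v j i = (fun k : Fin s.card => c (s.equivFin.symm k) * v (s.equivFin.symm k) i)
        (s.equivFin ⟨j, hj⟩) := by simp
    rw [h]
    exact Finset.le_sup (f := fun k : Fin s.card => c (s.equivFin.symm k) * v (s.equivFin.symm k) i)
      (Finset.mem_univ _)
  · apply Finset.sup_le; intro k _
    exact Finset.le_sup (f := fun j => c j * v j i) (s.equivFin.symm k).2

lemma basisUnique {n : ℕ} (K : Set (Fin n → NNReal))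
    (h0 : (0 : Fin n → NNReal) ∈ K)
    (hsup : ∀ x ∈ K, ∀ y ∈ K, (fun i => max (x i) (y i)) ∈ K)
    (hsmul : ∀ (c : NNReal), ∀ x ∈ K, (fun i => c * x i) ∈ K)
    (B : Set (Fin n → NNReal))
    (hBs : ∀ b ∈ B, Finset.univ.sup b = 1)
    (hKB : K = spanOf B)
    (hBind : ∀ b ∈ B, b ∉ spanOf (B \ {b})) :
    B = {u | u ∈ K ∧ IsExtremal K u ∧ Finset.univ.sup u = 1} := by
  classical
  have hBK : ∀ b ∈ B, b ∈ K := fun b hb => by rw [hKB]; exact selfMemSpanOf hb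
  apply Set.Subset.antisymm
  · -- B ⊆ E
    intro b hb
    have hb1 := hBs b hb
    have hbK := hBK b hb
    have hb0 : b ≠ 0 := by
      intro h
      rw [h] at hb1
      have : Finset.univ.sup (0 : Fin n → NNReal) = 0 :=
        le_antisymm (Finset.sup_le fun j _ => le_refl 0) (zero_le)
      rw [this] at hb1
      exact one_ne_zero hb1.symm
    have hne : (Finset.univ : Finset (Fin n)).Nonempty := by
      by_contra h
      rw [Finset.not_nonempty_iff_eq_empty] at h
      rw [h, Finset.sup_empty] at hb1
      exact absurd hb1 (by simp)
    obtain ⟨i₁, _, hi₁⟩ := Finset.exists_mem_eq_sup Finset.univ hne b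
    have hbi₁ : b i₁ = 1 := by rw [← hi₁, hb1]
    have claim : ∀ w ∈ K, (∀ j, w j ≤ b j) → w ≠ b →
        ∃ y ∈ spanOf (B \ {b}), ∃ r : NNReal, r < 1 ∧ ∀ j, w j = max (y j) (r * b j) := by
      intro w hw hwb hwne
      rw [hKB] at hw
      obtain ⟨m, v, c, hv, hwrep⟩ := hw
      have hterm : ∀ (j : Fin m) (i : Fin n), c j * v j i ≤ w i := by
        intro j i
        rw [congrFun hwrep i]
        exact Finset.le_sup (f := fun j => c j * v j i) (Finset.mem_univ j)
      set P : Fin m → Prop := fun j => v j = b with hP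
      set r : NNReal := (Finset.univ.filter P).sup c with hr
      set y : Fin n → NNReal :=
        fun i => (Finset.univ.filter fun j => ¬ P j).sup (fun j => c j * v j i) with hy
      have hyB : y ∈ spanOf (B \ {b}) := by
        apply memSpanOfFinsetSup'
        intro j hj
        exact ⟨hv j, by simpa using (Finset.mem_filter.mp hj).2⟩
      have hrlt : r < 1 := by
        rw [hr]
        apply (Finset.sup_lt_iff (by simp : (⊥ : NNReal) < 1)).mpr
        intro j hj
        have hPj : v j = b := (Finset.mem_filter.mp hj).2
        have hle1 : c j ≤ 1 := by
          have h2 := hterm j i₁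
          rw [hPj, hbi₁, mul_one] at h2
          calc c j ≤ w i₁ := h2
            _ ≤ b i₁ := hwb i₁
            _ = 1 := hbi₁
        rcases lt_or_eq_of_le hle1 with h | h
        · exact h
        · exfalso
          apply hwne
          funext i
          apply le_antisymm (hwb i)
          have h2 := hterm j i
          rw [hPj, h, one_mul] at h2
          exact h2
      refine ⟨y, hyB, r, hrlt, ?_⟩
      intro i
      have hsplit : (Finset.univ : Finset (Fin m)).sup (fun j => c j * v j i) =
          ((Finset.univ.filter P).sup fun j => c j * v j i) ⊔
          ((Finset.univ.filter fun j => ¬ P j).sup fun j => c j * v j i) := by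
        rw [← Finset.sup_union, Finset.filter_union_filter_not_eq]
      have hPsup : ((Finset.univ.filter P).sup fun j => c j * v j i) = r * b i := by
        have h1 : ((Finset.univ.filter P).sup fun j => c j * v j i)
            = (Finset.univ.filter P).sup fun j => b i * c j := by
          apply Finset.sup_congr rfl
          intro j hj
          rw [(Finset.mem_filter.mp hj).2, mul_comm]
        rw [h1, ← NNReal.mul_finset_sup, mul_comm, hr]
      rw [congrFun hwrep i, hsplit, hPsup, hy]
      exact max_comm _ _
    refine ⟨hbK, ?_, hb1⟩
    intro u hu v hv heq
    by_contra hcon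
    push_neg at hcon
    obtain ⟨hbu, hbv⟩ := hcon
    have hub : ∀ j, u j ≤ b j := fun j => (congrFun heq j) ▸ le_max_left _ _
    have hvb : ∀ j, v j ≤ b j := fun j => (congrFun heq j) ▸ le_max_right _ _
    obtain ⟨yu, hyu, ru, hru, hrepu⟩ := claim u hu hub (Ne.symm hbu)
    obtain ⟨yv, hyv, rv, hrv, hrepv⟩ := claim v hv hvb (Ne.symm hbv)
    have hyub : ∀ j, yu j ≤ b j := by
      intro j
      have h1 : yu j ≤ u j := by rw [hrepu j]; exact le_max_left _ _
      exact h1.trans (hub j)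
    have hyvb : ∀ j, yv j ≤ b j := by
      intro j
      have h1 : yv j ≤ v j := by rw [hrepv j]; exact le_max_left _ _
      exact h1.trans (hvb j)
    have hkey : ∀ j, b j = max (yu j) (yv j) := by
      intro j
      apply le_antisymm
      · by_contra h
        push_neg at h
        have h1 : yu j < b j := lt_of_le_of_lt (le_max_left _ _) h
        have h2 : yv j < b j := lt_of_le_of_lt (le_max_right _ _) h
        have hpos : 0 < b j := lt_of_le_of_lt (zero_le) h1
        have h3 : ru * b j < b j := mul_lt_of_lt_one_left hpos hru
        have h4 : rv * b j < b j := mul_lt_of_lt_one_left hpos hrv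
        have h5 : max (max (yu j) (ru * b j)) (max (yv j) (rv * b j)) < b j :=
          max_lt (max_lt h1 h3) (max_lt h2 h4)
        have h6 : b j = max (max (yu j) (ru * b j)) (max (yv j) (rv * b j)) := by
          conv_lhs => rw [congrFun heq j]
          rw [hrepu j, hrepv j]
        rw [← h6] at h5
        exact lt_irrefl _ h5
      · exact max_le (hyub j) (hyvb j)
    have hbspan : b ∈ spanOf (B \ {b}) := by
      have h1 := supMemSpanOf hyu hyv
      have hbe : b = fun j => max (yu j) (yv j) := funext hkey
      rw [← hbe] at h1
      exact h1
    exact absurd hbspan (hBind b hb)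
  · -- E ⊆ B
    intro u hu
    obtain ⟨huK, huext, hus⟩ := hu
    have hu0 : u ≠ 0 := by
      intro h
      rw [h] at hus
      have h2 : Finset.univ.sup (0 : Fin n → NNReal) = 0 :=
        le_antisymm (Finset.sup_le fun j _ => le_refl 0) (zero_le)
      rw [h2] at hus
      exact one_ne_zero hus.symm
    have huK' := huK
    rw [hKB] at huK'
    obtain ⟨m, v, c, hv, hurep⟩ := huK'
    obtain ⟨j, hj⟩ := extremalEqTerm h0 hsup huext hu0 m (fun j i => c j * v j i)
      (fun j => hsmul (c j) _ (hBK _ (hv j))) hurep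
    have hcj : c j = 1 := by
      have h1 : Finset.univ.sup u = c j * Finset.univ.sup (v j) := by
        rw [hj]
        exact (NNReal.mul_finset_sup _ _ _).symm
      rw [hus, hBs _ (hv j), mul_one] at h1
      exact h1.symm
    have h2 : u = v j := by
      rw [hj]; funext i; rw [hcj, one_mul]
    rw [h2]; exact hv j


/-- For a closed max cone `K ⊆ ℝ≥0^n` containing `0`, the set `E` of scaled extremals
is nonempty whenever `K ≠ {0}`, `K = span E`, and `E` is the unique scaled basis of `K`
(a scaled generating set none of whose elements is a max combination of the others). -/
theorem stmt16 {n : ℕ} (K : Set (Fin n → NNReal))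
    (h0 : (0 : Fin n → NNReal) ∈ K)
    (hsup : ∀ x ∈ K, ∀ y ∈ K, (fun i => max (x i) (y i)) ∈ K)
    (hsmul : ∀ (c : NNReal), ∀ x ∈ K, (fun i => c * x i) ∈ K)
    (hclosed : IsClosed K) :
    (K ≠ {0} → {u | u ∈ K ∧ IsExtremal K u ∧ Finset.univ.sup u = 1}.Nonempty) ∧
    K = spanOf {u | u ∈ K ∧ IsExtremal K u ∧ Finset.univ.sup u = 1} ∧
    (∀ B : Set (Fin n → NNReal),
      (∀ b ∈ B, Finset.univ.sup b = 1) →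
      K = spanOf B →
      (∀ b ∈ B, b ∉ spanOf (B \ {b})) →
      B = {u | u ∈ K ∧ IsExtremal K u ∧ Finset.univ.sup u = 1}) := by
  have hgen := genSpan K h0 hsup hsmul hclosed
  refine ⟨?_, hgen, fun B hBs hKB hBind => basisUnique K h0 hsup hsmul B hBs hKB hBind⟩
  intro hne
  have hex : ∃ x ∈ K, x ≠ 0 := by
    by_contra h
    push_neg at h
    apply hne
    apply Set.Subset.antisymm
    · intro y hy; exact h y hy
    · intro y hy; rw [Set.mem_singleton_iff] at hy; rw [hy]; exact h0
  obtain ⟨x, hxK, hx0⟩ := hex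
  have hx := hxK
  rw [hgen] at hx
  obtain ⟨m, v, c, hv, hrep⟩ := hx
  rcases Nat.eq_zero_or_pos m with hm | hm
  · exfalso
    apply hx0
    subst hm
    funext i
    simpa using congrFun hrep i
  · exact ⟨v ⟨0, hm⟩, hv _⟩
end

section
/- Let τ be a cycle of weight ≥ 1 on C ⊆ {1,…,n}, and let i, k ∈ C with i ≠ k. Then x^{(τ,i)} ≤_i x^{(τ,k)}. -/
open Finset Function

section Aux

variable {n : ℕ} (A : Matrix (Fin n) (Fin n) NNReal) (C : Finset (Fin n)) (τ : Fin n → Fin n)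

noncomputable def walkP (u : Fin n) (m : ℕ) : NNReal :=
  ∏ s ∈ Finset.range m, A (τ^[s] u) (τ^[s + 1] u)

lemma walkP_add (u : Fin n) (m d : ℕ) :
    walkP A τ u (m + d) = walkP A τ u m * walkP A τ (τ^[m] u) d := by
  unfold walkP
  rw [Finset.prod_range_add]
  congr 1
  refine Finset.prod_congr rfl fun s _ => ?_
  have h1 : m + s = s + m := Nat.add_comm m s
  have h2 : m + s + 1 = s + 1 + m := by omega
  rw [h2, h1, Function.iterate_add_apply, Function.iterate_add_apply]

lemma iter_mem (hmaps : ∀ l ∈ C, τ l ∈ C) {u : Fin n} (hu : u ∈ C) (m : ℕ) : τ^[m] u ∈ C := by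
  induction m with
  | zero => simpa
  | succ m ih => rw [Function.iterate_succ_apply']; exact hmaps _ ih

lemma walkP_pos (hmaps : ∀ l ∈ C, τ l ∈ C) (hpos : ∀ l ∈ C, 0 < A l (τ l)) {u : Fin n} (hu : u ∈ C) (m : ℕ) :
    0 < walkP A τ u m := by
  apply Finset.prod_pos
  intro s _
  rw [Function.iterate_succ_apply' τ s u]
  exact hpos _ (iter_mem C τ hmaps hu s)

lemma shift_fix (hmaps : ∀ l ∈ C, τ l ∈ C)
    (hcyclic : ∀ l ∈ C, ∀ l' ∈ C, ∃ m : ℕ, τ^[m] l = l') {l : Fin n} (hl : l ∈ C) {s d : ℕ}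
    (hfix : τ^[d] (τ^[s] l) = τ^[s] l) : τ^[d] l = l := by
  obtain ⟨e, he⟩ := hcyclic _ (iter_mem C τ hmaps hl s) l hl
  calc τ^[d] l = τ^[d] (τ^[e] (τ^[s] l)) := by rw [he]
    _ = τ^[e] (τ^[d] (τ^[s] l)) := by
        simp only [← Function.iterate_add_apply]
        congr 1
        omega
    _ = l := by rw [hfix, he]

lemma closed_one_le (hmaps : ∀ l ∈ C, τ l ∈ C)
    (hcyclic : ∀ l ∈ C, ∀ l' ∈ C, ∃ m : ℕ, τ^[m] l = l') (hw : 1 ≤ ∏ l ∈ C, A l (τ l)) {l : Fin n} (hl : l ∈ C)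
    {d : ℕ} (hd : τ^[d] l = l) : 1 ≤ walkP A τ l d := by
  classical
  have key : ∀ s t : ℕ, s < t → τ^[s] l = τ^[t] l → 0 < t - s ∧ τ^[t - s] l = l := by
    intro s t hst h
    have hfix : τ^[t - s] (τ^[s] l) = τ^[s] l := by
      rw [← Function.iterate_add_apply, Nat.sub_add_cancel hst.le, ← h]
    exact ⟨by omega, shift_fix C τ hmaps hcyclic hl hfix⟩
  have hex : ∃ p, 0 < p ∧ τ^[p] l = l := by
    obtain ⟨u, hu, v, hv, huv, hfuv⟩ :=
      Finset.exists_ne_map_eq_of_card_lt_of_maps_to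
        (s := Finset.range (C.card + 1)) (t := C) (by simp)
        (fun m _ => iter_mem C τ hmaps hl m)
    rcases lt_or_gt_of_ne huv with h | h
    · exact ⟨v - u, key u v h hfuv⟩
    · exact ⟨u - v, key v u h hfuv.symm⟩
  set p := Nat.find hex with hp
  obtain ⟨hppos, hpfix⟩ : 0 < p ∧ τ^[p] l = l := Nat.find_spec hex
  have hpq : ∀ q, τ^[p * q] l = l := by
    intro q
    induction q with
    | zero => simp
    | succ q ih =>
        rw [Nat.mul_succ, Function.iterate_add_apply, hpfix, ih]
  have hmod : ∀ m, τ^[m] l = τ^[m % p] l := by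
    intro m
    conv_lhs => rw [← Nat.mod_add_div m p]
    rw [Function.iterate_add_apply, hpq]
  have hinj : ∀ s < p, ∀ t < p, τ^[s] l = τ^[t] l → s = t := by
    intro s hs t ht h
    by_contra hne
    rcases lt_or_gt_of_ne hne with hlt | hlt
    · obtain ⟨h1, h2⟩ := key s t hlt h
      exact Nat.find_min hex (show t - s < p by omega) ⟨h1, h2⟩
    · obtain ⟨h1, h2⟩ := key t s hlt h.symm
      exact Nat.find_min hex (show s - t < p by omega) ⟨h1, h2⟩
  have himg : walkP A τ l p = ∏ j ∈ C, A j (τ j) := by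
    unfold walkP
    refine Finset.prod_bij (fun s _ => τ^[s] l) ?_ ?_ ?_ ?_
    · exact fun s _ => iter_mem C τ hmaps hl s
    · intro s hs t ht h
      exact hinj s (Finset.mem_range.mp hs) t (Finset.mem_range.mp ht) h
    · intro j hj
      obtain ⟨m, hm⟩ := hcyclic l hl j hj
      refine ⟨m % p, Finset.mem_range.mpr (Nat.mod_lt m hppos), ?_⟩
      show τ^[m % p] l = j
      rw [← hmod]; exact hm
    · intro s _
      rw [Function.iterate_succ_apply' τ s l]
  have hWq : ∀ q, walkP A τ l (p * q) = (walkP A τ l p) ^ q := by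
    intro q
    induction q with
    | zero => simp [walkP]
    | succ q ih =>
        rw [Nat.mul_succ, walkP_add, hpq, ih, pow_succ]
  have hfixmod : τ^[d % p] l = l := by rw [← hmod]; exact hd
  have hdvd : d % p = 0 := by
    by_contra h
    exact Nat.find_min hex (Nat.mod_lt d hppos) ⟨Nat.pos_of_ne_zero h, hfixmod⟩
  have hdeq : d = p * (d / p) := by have h := Nat.div_add_mod d p; omega
  rw [hdeq, hWq, himg]
  exact one_le_pow_of_one_le' hw _

end Aux


/-- Let `τ` be a cycle of weight `≥ 1` on `C ⊆ {1,…,n}` and `i, k ∈ C` with `i ≠ k`.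
Then `x^{(τ,i)} ≤_i x^{(τ,k)}`, where `x = x^{(τ,k)}` and `y = x^{(τ,i)}` are
characterized as usual, and `y ≤_i x` means `x_i ≠ 0`, `y_i ≠ 0` and
`y_l y_i⁻¹ ≤ x_l x_i⁻¹` for all `l`. -/
theorem stmt19 {n : ℕ} (A : Matrix (Fin n) (Fin n) NNReal) (C : Finset (Fin n))
    (τ : Fin n → Fin n)
    (hmaps : ∀ l ∈ C, τ l ∈ C)
    (hcyclic : ∀ l ∈ C, ∀ l' ∈ C, ∃ m : ℕ, τ^[m] l = l')
    (hw : 1 ≤ ∏ l ∈ C, A l (τ l))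
    (hpos : ∀ l ∈ C, 0 < A l (τ l))
    (i : Fin n) (hi : i ∈ C) (k : Fin n) (hk : k ∈ C) (hik : i ≠ k)
    (x y : Fin n → NNReal)
    (hxk : x k = 1)
    (hxr : ∀ l : Fin n, l ≠ k → ∀ m : ℕ, τ^[m] k = l → (∀ m' < m, τ^[m'] k ≠ l) →
      x l = (∏ s ∈ Finset.range m, A (τ^[s] k) (τ^[s + 1] k))⁻¹)
    (hx0 : ∀ l : Fin n, (∀ m : ℕ, τ^[m] k ≠ l) → x l = 0)
    (hyk : y i = 1)
    (hyr : ∀ l : Fin n, l ≠ i → ∀ m : ℕ, τ^[m] i = l → (∀ m' < m, τ^[m'] i ≠ l) →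
      y l = (∏ s ∈ Finset.range m, A (τ^[s] i) (τ^[s + 1] i))⁻¹)
    (hy0 : ∀ l : Fin n, (∀ m : ℕ, τ^[m] i ≠ l) → y l = 0) :
    x i ≠ 0 ∧ y i ≠ 0 ∧ ∀ l, y l * (y i)⁻¹ ≤ x l * (x i)⁻¹ := by
  classical
  -- uniform characterization of x
  have hxchar : ∀ l, ∀ h : ∃ m, τ^[m] k = l, x l = (walkP A τ k (Nat.find h))⁻¹ := by
    intro l h
    rcases eq_or_ne l k with rfl | hlk
    · have h0 : Nat.find h = 0 := Nat.le_zero.mp (Nat.find_le (by simp))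
      rw [hxk, h0]
      simp [walkP]
    · exact hxr l hlk _ (Nat.find_spec h) fun m' hm' => Nat.find_min h hm'
  have hychar : ∀ l, ∀ h : ∃ m, τ^[m] i = l, y l = (walkP A τ i (Nat.find h))⁻¹ := by
    intro l h
    rcases eq_or_ne l i with rfl | hli
    · have h0 : Nat.find h = 0 := Nat.le_zero.mp (Nat.find_le (by simp))
      rw [hyk, h0]
      simp [walkP]
    · exact hyr l hli _ (Nat.find_spec h) fun m' hm' => Nat.find_min h hm'
  have hexi : ∃ m, τ^[m] k = i := hcyclic k hk i hi
  have haspec : τ^[Nat.find hexi] k = i := Nat.find_spec hexi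
  set a := Nat.find hexi with ha
  have hxi : x i = (walkP A τ k a)⁻¹ := hxchar i hexi
  have hPk_pos : ∀ m, 0 < walkP A τ k m := walkP_pos A C τ hmaps hpos hk
  have hPi_pos : ∀ m, 0 < walkP A τ i m := walkP_pos A C τ hmaps hpos hi
  have hxi_ne : x i ≠ 0 := by
    rw [hxi]
    exact inv_ne_zero (hPk_pos a).ne'
  refine ⟨hxi_ne, by rw [hyk]; exact one_ne_zero, fun l => ?_⟩
  rw [hyk, inv_one, mul_one]
  by_cases hreach : ∃ m, τ^[m] i = l
  · have hcspec : τ^[Nat.find hreach] i = l := Nat.find_spec hreach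
    set c := Nat.find hreach with hc
    have hyl : y l = (walkP A τ i c)⁻¹ := hychar l hreach
    have hlC : l ∈ C := hcspec ▸ iter_mem C τ hmaps hi c
    have hexkl : ∃ m, τ^[m] k = l :=
      ⟨c + a, by rw [Function.iterate_add_apply, haspec, hcspec]⟩
    have hmspec : τ^[Nat.find hexkl] k = l := Nat.find_spec hexkl
    set m := Nat.find hexkl with hm
    have hmle : m ≤ c + a := Nat.find_le (by rw [Function.iterate_add_apply, haspec, hcspec])
    have hd : τ^[c + a - m] l = l := by
      have h1 : τ^[(c + a - m) + m] k = l := by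
        rw [show c + a - m + m = c + a from by omega, Function.iterate_add_apply, haspec, hcspec]
      rwa [Function.iterate_add_apply, hmspec] at h1
    have hone : 1 ≤ walkP A τ l (c + a - m) := closed_one_le A C τ hmaps hcyclic hw hlC hd
    have hsplit : walkP A τ k (a + c) = walkP A τ k a * walkP A τ i c := by
      rw [walkP_add, haspec]
    have hle : walkP A τ k m ≤ walkP A τ k a * walkP A τ i c := by
      rw [← hsplit, show a + c = m + (c + a - m) from by omega, walkP_add, hmspec]
      exact le_mul_of_one_le_right zero_le hone
    rw [hyl, hxchar l hexkl, ← hm, hxi, inv_inv]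
    calc (walkP A τ i c)⁻¹
        = walkP A τ k a * (walkP A τ k a * walkP A τ i c)⁻¹ := by
          rw [mul_inv, ← mul_assoc, mul_inv_cancel₀ (hPk_pos a).ne', one_mul]
      _ ≤ walkP A τ k a * (walkP A τ k m)⁻¹ := by
          exact mul_le_mul_right (inv_anti₀ (hPk_pos m) hle) _
      _ = (walkP A τ k m)⁻¹ * walkP A τ k a := mul_comm _ _
  · push_neg at hreach
    rw [hy0 l hreach]
    exact zero_le
end
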